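/- Let μ ≥ 0, σ > 0, θ > 0 and λ > 0, and set r = (μ − √(μ² + 2σ²(λ+θ)))/σ². Define M(x) = (λ/(λ+θ))·e^{rx} + θ/(λ+θ). Then M(0) = 1, r < 0 (so e^{rx} → 0 as x → +∞), and for every x ∈ ℝ, (σ²/2)·M''(x) − μ·M'(x) − (λ+θ)·M(x) + θ = 0. -/

import Mathlib

/-- For the drifted Brownian motion with Poisson jumps, with
`r = (μ - √(μ² + 2σ²(λ+θ)))/σ²`, the function `M(x) = (λ/(λ+θ))e^{rx} + θ/(λ+θ)`
satisfies `M(0) = 1`, `r < 0` (so `e^{rx} → 0` as `x → ∞`), and the ODE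
`(σ²/2)M''(x) - μM'(x) - (λ+θ)M(x) + θ = 0`. -/
theorem stmt_19 (μ σ θ lam : ℝ) (hμ : 0 ≤ μ) (hσ : 0 < σ) (hθ : 0 < θ) (hlam : 0 < lam)
    (r : ℝ) (hr : r = (μ - Real.sqrt (μ ^ 2 + 2 * σ ^ 2 * (lam + θ))) / σ ^ 2)
    (M : ℝ → ℝ)
    (hM : ∀ x : ℝ, M x = (lam / (lam + θ)) * Real.exp (r * x) + θ / (lam + θ)) :
    M 0 = 1 ∧
    r < 0 ∧
    Filter.Tendsto (fun x : ℝ => Real.exp (r * x)) Filter.atTop (nhds 0) ∧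
    (∀ x : ℝ, σ ^ 2 / 2 * deriv (deriv M) x - μ * deriv M x - (lam + θ) * M x + θ = 0) := by
  have hσ2 : (0:ℝ) < σ ^ 2 := by positivity
  have hlθ : (0:ℝ) < lam + θ := by linarith
  have hs : Real.sqrt (μ ^ 2 + 2 * σ ^ 2 * (lam + θ)) ^ 2 = μ ^ 2 + 2 * σ ^ 2 * (lam + θ) :=
    Real.sq_sqrt (by positivity)
  have hμs : μ < Real.sqrt (μ ^ 2 + 2 * σ ^ 2 * (lam + θ)) := by
    have h1 : μ = Real.sqrt (μ ^ 2) := by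
      rw [Real.sqrt_sq hμ]
    nlinarith [Real.sqrt_lt_sqrt (by positivity : (0:ℝ) ≤ μ ^ 2)
      (by nlinarith : μ ^ 2 < μ ^ 2 + 2 * σ ^ 2 * (lam + θ))]
  have hrneg : r < 0 := by
    rw [hr]
    apply div_neg_of_neg_of_pos _ hσ2
    linarith
  -- key identity
  have hkey : σ ^ 2 / 2 * r ^ 2 - μ * r = lam + θ := by
    rw [hr]
    field_simp
    have hs' : Real.sqrt (μ ^ 2 + σ ^ 2 * 2 * (lam + θ)) ^ 2 = μ ^ 2 + σ ^ 2 * 2 * (lam + θ) :=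
      Real.sq_sqrt (by positivity)
    nlinarith [hs']
  have hMfun : M = fun x => (lam / (lam + θ)) * Real.exp (r * x) + θ / (lam + θ) := funext hM
  have hd1 : deriv M = fun x => (lam / (lam + θ)) * (r * Real.exp (r * x)) := by
    rw [hMfun]
    funext x
    have : HasDerivAt (fun x => (lam / (lam + θ)) * Real.exp (r * x) + θ / (lam + θ))
        ((lam / (lam + θ)) * (r * Real.exp (r * x))) x := by
      have h := (Real.hasDerivAt_exp (r * x)).comp x
        ((hasDerivAt_id x).const_mul r)
      simpa [mul_comm, mul_assoc, mul_left_comm] using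
        ((h.const_mul (lam / (lam + θ))).add_const (θ / (lam + θ)))
    exact this.deriv
  have hd2 : deriv (deriv M) = fun x => (lam / (lam + θ)) * (r * (r * Real.exp (r * x))) := by
    rw [hd1]
    funext x
    have : HasDerivAt (fun x => (lam / (lam + θ)) * (r * Real.exp (r * x)))
        ((lam / (lam + θ)) * (r * (r * Real.exp (r * x)))) x := by
      have h := (Real.hasDerivAt_exp (r * x)).comp x
        ((hasDerivAt_id x).const_mul r)
      simpa [mul_comm, mul_assoc, mul_left_comm] using
        (h.const_mul ((lam / (lam + θ)) * r))
    exact this.deriv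
  refine ⟨?_, hrneg, ?_, ?_⟩
  · rw [hM 0]
    simp
    field_simp
  · have : Filter.Tendsto (fun x : ℝ => r * x) Filter.atTop Filter.atBot :=
      Filter.Tendsto.const_mul_atTop_of_neg hrneg Filter.tendsto_id
    exact Real.tendsto_exp_atBot.comp this
  · intro x
    rw [hd2, hd1, hM x]; simp only
    have hθid : (lam + θ) * (θ / (lam + θ)) = θ := by field_simp
    linear_combination (lam / (lam + θ) * Real.exp (r * x)) * hkey - hθid
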